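/- Let u_i, M ∈ ℝ with M ≥ 0, let s ≤ t be real numbers, let u_j : ℝ → ℝ be integrable on [s, t] with |u_j(τ)| ≤ M for almost every τ ∈ [s, t], and define x_j(τ) = x_j(s) + ∫_s^τ u_j(σ) dσ and x_i(τ) = x_i(s) + u_i·(τ − s) for τ ∈ [s, t]. Then ∫_s^t −u_i·(x_j(τ) − x_i(τ)) dτ ≤ α·(t − s) + (1/2)·γ·(t − s)², where α = −u_i·(x_j(s) − x_i(s)) and γ = |u_i|·M + u_i². -/

import Mathlib

open MeasureTheory

theorem integral_pairwise_contribution_promise_bound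
    (ui M s t : ℝ) (hM : 0 ≤ M) (hst : s ≤ t)
    (uj : ℝ → ℝ) (hint : IntegrableOn uj (Set.Icc s t))
    (hbound : ∀ᵐ τ ∂(volume.restrict (Set.Icc s t)), |uj τ| ≤ M)
    (xjs xis : ℝ) :
    ∫ τ in s..t, -ui * ((xjs + ∫ σ in s..τ, uj σ) - (xis + ui * (τ - s))) ≤
      (-ui * (xjs - xis)) * (t - s) +
        (1 / 2 : ℝ) * (|ui| * M + ui ^ 2) * (t - s) ^ 2 := by
  set α := -ui * (xjs - xis) with hα
  set γ := |ui| * M + ui ^ 2 with hγ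
  -- primitive is continuous on [s,t]
  have hIcc : Set.uIcc s t = Set.Icc s t := Set.uIcc_of_le hst
  have hcont : ContinuousOn (fun τ => ∫ σ in s..τ, uj σ) (Set.Icc s t) := by
    rw [← hIcc]
    exact intervalIntegral.continuousOn_primitive_interval (by rwa [hIcc])
  -- key pointwise bound
  have hkey : ∀ τ ∈ Set.Icc s t,
      -ui * ((xjs + ∫ σ in s..τ, uj σ) - (xis + ui * (τ - s))) ≤ α + γ * (τ - s) := by
    intro τ hτ
    obtain ⟨hsτ, hτt⟩ := hτ
    have hintτ : IntervalIntegrable uj volume s τ := by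
      have : IntegrableOn uj (Set.uIcc s τ) := by
        apply hint.mono_set
        rw [Set.uIcc_of_le hsτ]
        exact Set.Icc_subset_Icc le_rfl hτt
      exact this.intervalIntegrable
    have habs : |∫ σ in s..τ, uj σ| ≤ M * (τ - s) := by
      calc |∫ σ in s..τ, uj σ| ≤ ∫ σ in s..τ, |uj σ| :=
            intervalIntegral.abs_integral_le_integral_abs hsτ
        _ ≤ ∫ σ in s..τ, M := by
            apply intervalIntegral.integral_mono_ae_restrict hsτ hintτ.abs
              intervalIntegrable_const
            exact hbound.filter_mono
              (ae_mono (Measure.restrict_mono (Set.Icc_subset_Icc le_rfl hτt) le_rfl))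
        _ = M * (τ - s) := by simp [mul_comm]
    have h1 : -ui * (∫ σ in s..τ, uj σ) ≤ |ui| * (M * (τ - s)) := by
      calc -ui * (∫ σ in s..τ, uj σ) ≤ |(-ui) * (∫ σ in s..τ, uj σ)| := le_abs_self _
        _ = |ui| * |∫ σ in s..τ, uj σ| := by rw [abs_mul, abs_neg]
        _ ≤ |ui| * (M * (τ - s)) := by
            exact mul_le_mul_of_nonneg_left habs (abs_nonneg _)
    have : -ui * ((xjs + ∫ σ in s..τ, uj σ) - (xis + ui * (τ - s)))
        = α + (-ui * (∫ σ in s..τ, uj σ)) + ui ^ 2 * (τ - s) := by ring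
    rw [this, hγ]
    nlinarith [h1]
  -- integrability of LHS
  have hlhsInt : IntervalIntegrable
      (fun τ => -ui * ((xjs + ∫ σ in s..τ, uj σ) - (xis + ui * (τ - s)))) volume s t := by
    apply ContinuousOn.intervalIntegrable
    rw [hIcc]
    apply ContinuousOn.mul continuousOn_const
    exact ((continuousOn_const.add hcont).sub
      (continuousOn_const.add (continuousOn_const.mul
        ((continuousOn_id.sub continuousOn_const))))) |>.congr fun x _ => rfl
  have hrhsInt : IntervalIntegrable (fun τ => α + γ * (τ - s)) volume s t := by
    apply Continuous.intervalIntegrable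
    continuity
  have hmono : (∫ τ in s..t, -ui * ((xjs + ∫ σ in s..τ, uj σ) - (xis + ui * (τ - s))))
      ≤ ∫ τ in s..t, (α + γ * (τ - s)) := by
    apply intervalIntegral.integral_mono_on hst hlhsInt hrhsInt hkey
  refine hmono.trans_eq ?_
  have : (∫ τ in s..t, (α + γ * (τ - s)))
      = α * (t - s) + γ * ((t - s) ^ 2 / 2) := by
    rw [intervalIntegral.integral_add intervalIntegrable_const
      (by apply Continuous.intervalIntegrable; continuity)]
    simp [intervalIntegral.integral_comp_sub_right (fun x => γ * x) s, mul_comm,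
      intervalIntegral.integral_const_mul, integral_id]
    exact Or.inl (by ring)
  rw [this]; ring
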